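/- Let k, ℓ, n be natural numbers with n ≥ 16 and ℓ ≤ k ≤ n/(4·log₂ n), with k ≥ 4. Let A be a clause or a monomial over the variables of ERPHP (and their twins), and let ρ be a random restriction sampled from the distribution D. Then the pigeon-width of A restricted by ρ is less than ℓ with probability at least 1 − k·(16/15)^ℓ·(2k·log₂ n)^k / n^ℓ. -/

import Mathlib

namespace NarrowProofs

/-- The variables of the 3-CNF relativized pigeonhole principle `ERPHP`. -/
inductive ERVar where
  | p (u v : ℕ)
  | q (v w : ℕ)
  | r (v : ℕ)
  | rr (v v' : ℕ)
  | y (u v : ℕ)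
  | z (v w : ℕ)
deriving DecidableEq

/-- The pigeon (if any) mentioned by a variable: the variables `q v w` and
`z v w` mention pigeon `v`; no other variable mentions a pigeon. -/
def ERVar.pigeonOf : ERVar → Option ℕ
  | .q v _ => some v
  | .z v _ => some v
  | _ => none

/-- Validity of a variable of `ERPHP` (1-based index ranges): `p u v` with
`u∈[k]`, `v∈[n]`; `q v w` with `v∈[n]`, `w∈[k-1]`; `r v` with `v∈[n]`;
`rr v v'` with `v≠v'∈[n]`; `y u v` with `u∈[k]`, `v∈[2,n-2]`; `z v w` with
`v∈[n]`, `w∈[k-3]`. -/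
def ERVar.valid (n k : ℕ) : ERVar → Prop
  | .p u v => 1 ≤ u ∧ u ≤ k ∧ 1 ≤ v ∧ v ≤ n
  | .q v w => 1 ≤ v ∧ v ≤ n ∧ 1 ≤ w ∧ w ≤ k - 1
  | .r v => 1 ≤ v ∧ v ≤ n
  | .rr v v' => 1 ≤ v ∧ v ≤ n ∧ 1 ≤ v' ∧ v' ≤ n ∧ v ≠ v'
  | .y u v => 1 ≤ u ∧ u ≤ k ∧ 2 ≤ v ∧ v ≤ n - 2
  | .z v w => 1 ≤ v ∧ v ≤ n ∧ 1 ≤ w ∧ w ≤ k - 3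

/-- The sample space of the distribution `D`: a uniformly random `k`-element
subset `S` of `[n]` together with independent uniformly random Boolean values
`b_v` for the elements of `[n]` (only the values outside `S` are used). -/
abbrev Omega (n k : ℕ) :=
  {S : Finset {x // x ∈ Finset.Icc 1 n} // S.card = k} × ({x // x ∈ Finset.Icc 1 n} → Bool)

/-- Whether `v ∈ S` for the sampled set `S`. -/
def inS {n k : ℕ} (ω : Omega n k) (v : ℕ) : Bool :=
  if h : v ∈ Finset.Icc 1 n then
    decide ((⟨v, h⟩ : {x // x ∈ Finset.Icc 1 n}) ∈ ω.1.1)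
  else false

/-- The pigeon `v_u` assigned to `u ∈ [k]`: the `u`-th smallest element of the
sampled set `S = {v_1 < v_2 < ⋯ < v_k}`. -/
noncomputable def pigeonAt {n k : ℕ} (ω : Omega n k) (u : ℕ) : ℕ :=
  if h : 1 ≤ u ∧ u ≤ k then
    ((ω.1.1.orderIsoOfFin ω.1.2) ⟨u - 1, by omega⟩ : {x // x ∈ Finset.Icc 1 n}).val
  else 0

/-- The random restriction `ρ` determined by the sample `ω` (value `some true`
is ⊤, `some false` is ⊥, `none` means unset):
`r_v = ⊤` iff `v ∈ S`; `r_{v,v'} = r_v ∧ r_{v'}`; `p_{u,v} = ⊤` iff `v = v_u`;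
the `y_{u,v}` are set so as to satisfy the corresponding clauses
(`y_{u,v} = ⊤` iff `v < v_u`); `q_{v,w}` and `z_{v,w}` are left unset for
`v ∈ S` and are set to the random bit `b_v` for `v ∉ S`. -/
noncomputable def rho (n k : ℕ) (ω : Omega n k) : ERVar → Option Bool
  | .p u v => if 1 ≤ u ∧ u ≤ k then some (decide (v = pigeonAt ω u)) else none
  | .q v _ =>
      if inS ω v then none
      else if h : v ∈ Finset.Icc 1 n then some (ω.2 ⟨v, h⟩) else some false
  | .r v => some (inS ω v)
  | .rr v v' => some (inS ω v && inS ω v')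
  | .y u v => if 1 ≤ u ∧ u ≤ k then some (decide (v < pigeonAt ω u)) else none
  | .z v _ =>
      if inS ω v then none
      else if h : v ∈ Finset.Icc 1 n then some (ω.2 ⟨v, h⟩) else some false

/-- `A` (a clause, or — with the sign bit read as the twin-variable flag — a
monomial) is killed by `ρ`: some literal of the clause is satisfied
(respectively, some variable of the monomial is set to the value that makes
the monomial vanish). -/
def killed (ρ : ERVar → Option Bool) (A : Finset (ERVar × Bool)) : Prop :=
  ∃ l ∈ A, ρ l.1 = some l.2

/-- The pigeon-width of `A` restricted by `ρ`: `0` if `A` is killed by `ρ`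
(the restricted clause is trivially true, resp. the restricted monomial
vanishes), and otherwise the number of pigeons mentioned by the variables of
`A` that are left unset by `ρ` (the variables fixed by `ρ` disappear). -/
noncomputable def restrictedPigeonWidth (ρ : ERVar → Option Bool)
    (A : Finset (ERVar × Bool)) : ℕ :=
  letI := Classical.propDecidable
  if killed ρ A then 0
  else Set.ncard {v : ℕ | ∃ l ∈ A, ρ l.1 = none ∧ l.1.pigeonOf = some v}

private lemma descFactorial_mul_pow_le {k n : ℕ} (hkn : k ≤ n) (l : ℕ) :
    Nat.descFactorial k l * n ^ l ≤ Nat.descFactorial n l * k ^ l := by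
  induction l with
  | zero => simp
  | succ l ih =>
    rw [Nat.descFactorial_succ, Nat.descFactorial_succ, pow_succ, pow_succ]
    have h1 : (k - l) * n ≤ (n - l) * k := by
      have h2 : l * k ≤ l * n := Nat.mul_le_mul_left l hkn
      have e3 : k * n = n * k := Nat.mul_comm k n
      rw [Nat.sub_mul, Nat.sub_mul]
      omega
    calc (k - l) * Nat.descFactorial k l * (n ^ l * n)
        = ((k - l) * n) * (Nat.descFactorial k l * n ^ l) := by ring
      _ ≤ ((n - l) * k) * (Nat.descFactorial n l * k ^ l) := Nat.mul_le_mul h1 ih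
      _ = (n - l) * Nat.descFactorial n l * (k ^ l * k) := by ring

private lemma choose_mul_pow_le {k n : ℕ} (hkn : k ≤ n) (l : ℕ) :
    Nat.choose k l * n ^ l ≤ Nat.choose n l * k ^ l := by
  have h := descFactorial_mul_pow_le hkn l
  rw [Nat.descFactorial_eq_factorial_mul_choose, Nat.descFactorial_eq_factorial_mul_choose] at h
  have hl : 0 < Nat.factorial l := Nat.factorial_pos l
  refine Nat.le_of_mul_le_mul_left ?_ hl
  calc Nat.factorial l * (Nat.choose k l * n ^ l)
      = Nat.factorial l * Nat.choose k l * n ^ l := by ring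
    _ ≤ Nat.factorial l * Nat.choose n l * k ^ l := h
    _ = Nat.factorial l * (Nat.choose n l * k ^ l) := by ring

private lemma key_choose {l k n : ℕ} (hlk : l ≤ k) (hkn : k ≤ n) :
    n ^ l * Nat.choose (n - l) (k - l) ≤ Nat.choose n k * k ^ l := by
  have hid := Nat.choose_mul (n := n) hlk
  have h2 := choose_mul_pow_le hkn l
  have hpos : 0 < Nat.choose n l := Nat.choose_pos (hlk.trans hkn)
  refine Nat.le_of_mul_le_mul_left ?_ hpos
  calc Nat.choose n l * (n ^ l * Nat.choose (n - l) (k - l))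
      = n ^ l * (Nat.choose n l * Nat.choose (n - l) (k - l)) := by ring
    _ = n ^ l * (Nat.choose n k * Nat.choose k l) := by rw [← hid]
    _ = Nat.choose n k * (Nat.choose k l * n ^ l) := by ring
    _ ≤ Nat.choose n k * (Nat.choose n l * k ^ l) := Nat.mul_le_mul_left _ h2
    _ = Nat.choose n l * (Nat.choose n k * k ^ l) := by ring

private lemma choose_le_two_pow' (m l : ℕ) : Nat.choose m l ≤ 2 ^ m := by
  by_cases h : l ≤ m
  · calc Nat.choose m l ≤ ∑ i ∈ Finset.range (m + 1), Nat.choose m i :=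
        Finset.single_le_sum (fun i _ => Nat.zero_le _) (Finset.mem_range.2 (by omega))
      _ = 2 ^ m := Nat.sum_range_choose m
  · rw [Nat.choose_eq_zero_of_lt (by omega)]; exact Nat.zero_le _


set_option maxHeartbeats 1000000 in
/-- for `n ≥ 16`, `4 ≤ k`, `ℓ ≤ k ≤ n/(4·log₂ n)` and any clause
or monomial `A` over the variables of `ERPHP` (and their twins), the
pigeon-width of `A` restricted by a random restriction `ρ` sampled from `D`
is less than `ℓ` with probability at least
`1 − k·(16/15)^ℓ·(2k·log₂ n)^k / n^ℓ`. -/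
theorem restriction_pigeon_width
    (n k ℓ : ℕ) (hn : 16 ≤ n) (hk : 4 ≤ k) (hlk : ℓ ≤ k)
    (hkn : (k : ℝ) ≤ (n : ℝ) / (4 * Real.logb 2 (n : ℝ)))
    (A : Finset (ERVar × Bool)) (hA : ∀ l ∈ A, ERVar.valid n k l.1) :
    1 - (k : ℝ) * (16 / 15 : ℝ) ^ ℓ * (2 * (k : ℝ) * Real.logb 2 (n : ℝ)) ^ k / (n : ℝ) ^ ℓ ≤
      (Set.ncard {ω : Omega n k | restrictedPigeonWidth (rho n k ω) A < ℓ} : ℝ) /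
        (Fintype.card (Omega n k) : ℝ) := by
  have hN : Fintype.card (Omega n k) = Nat.choose n k * 2 ^ n := by
    rw [Fintype.card_prod, Fintype.card_finset_len, Fintype.card_fun, Fintype.card_coe,
      Nat.card_Icc, Fintype.card_bool]
    norm_num
  rw [hN]
  classical
  haveI instI : Fintype {x // x ∈ Finset.Icc 1 n} := Finset.Subtype.fintype _
  have hIcard : Fintype.card (Finset.Icc 1 n) = n := by
    rw [Fintype.card_coe, Nat.card_Icc]; omega
  have hn0 : (0:ℝ) < (n:ℝ) := by
    have : 0 < n := by omega
    exact_mod_cast this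
  have hL : (4:ℝ) ≤ Real.logb 2 (n:ℝ) := by
    rw [Real.le_logb_iff_rpow_le one_lt_two hn0]
    have h16 : (2:ℝ) ^ (4:ℝ) = 16 := by
      rw [show (4:ℝ) = ((4:ℕ):ℝ) by norm_num, Real.rpow_natCast]; norm_num
    rw [h16]; exact_mod_cast hn
  set L := Real.logb 2 (n:ℝ) with hLdef
  have hkR1 : (1:ℝ) ≤ (k:ℝ) := by exact_mod_cast (by omega : 1 ≤ k)
  have hkRn : (k:ℝ) ≤ (n:ℝ) := by
    have h1 : (n:ℝ) / (4 * L) ≤ (n:ℝ) := div_le_self (le_of_lt hn0) (by linarith)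
    linarith
  have hknN : k ≤ n := by exact_mod_cast hkRn
  have hNpos : 0 < Nat.choose n k * 2 ^ n :=
    Nat.mul_pos (Nat.choose_pos hknN) (Nat.pow_pos (by omega : 0 < 2))
  have hNR : (0:ℝ) < ((Nat.choose n k * 2 ^ n : ℕ) : ℝ) := by exact_mod_cast hNpos
  set P : Omega n k → Prop := fun ω => restrictedPigeonWidth (rho n k ω) A < ℓ with hP
  set Good := Finset.univ.filter P with hGood
  set Bad := Finset.univ.filter (fun ω => ¬ P ω) with hBadDef
  have hGB : Good.card + Bad.card = Nat.choose n k * 2 ^ n := by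
    rw [hGood, hBadDef, Finset.card_filter_add_card_filter_not, Finset.card_univ,
      Fintype.card_prod, Fintype.card_finset_len, Fintype.card_fun, Fintype.card_coe,
      Nat.card_Icc, Fintype.card_bool]
    norm_num
  have hncard : {ω : Omega n k | P ω}.ncard = Good.card := by
    rw [Set.ncard_eq_toFinset_card', Set.toFinset_setOf]
  have hmain : (Bad.card : ℝ) ≤
      ((k:ℝ) * (16/15:ℝ) ^ ℓ * (2 * (k:ℝ) * L) ^ k / (n:ℝ) ^ ℓ) *
        ((Nat.choose n k * 2 ^ n : ℕ) : ℝ) := by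
    rcases Nat.eq_zero_or_pos ℓ with hl0 | hl
    · -- trivial case ℓ = 0 : the bound is ≥ 1
      have hBadle' : (Bad.card : ℝ) ≤ ((Nat.choose n k * 2 ^ n : ℕ) : ℝ) := by
        have h : Bad.card ≤ Nat.choose n k * 2 ^ n := by omega
        exact_mod_cast h
      have h2kL : (1:ℝ) ≤ 2 * (k:ℝ) * L := by nlinarith
      have hBge : (1:ℝ) ≤ (k:ℝ) * (16/15:ℝ) ^ ℓ * (2 * (k:ℝ) * L) ^ k / (n:ℝ) ^ ℓ := by
        rw [hl0]
        simp only [pow_zero, mul_one, div_one]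
        calc (1:ℝ) = 1 * 1 := by ring
          _ ≤ (k:ℝ) * (2 * (k:ℝ) * L) ^ k :=
              mul_le_mul hkR1 (one_le_pow₀ h2kL) zero_le_one (by linarith)
      calc (Bad.card : ℝ) ≤ ((Nat.choose n k * 2 ^ n : ℕ) : ℝ) := hBadle'
        _ = 1 * ((Nat.choose n k * 2 ^ n : ℕ) : ℝ) := (one_mul _).symm
        _ ≤ _ := mul_le_mul_of_nonneg_right hBge (le_of_lt hNR)
    -- main case : 1 ≤ ℓ
    · set M : Finset {x // x ∈ Finset.Icc 1 n} :=
        Finset.univ.filter (fun x => ∃ l ∈ A, l.1.pigeonOf = some x.val) with hMdef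
      set f : {x // x ∈ Finset.Icc 1 n} → Bool := fun x =>
        if h : ∃ l ∈ A, l.1.pigeonOf = some x.val then h.choose.2 else false with hfdef
      set Q : Omega n k → Prop := fun ω =>
        ℓ ≤ (M ∩ ω.1.1).card ∧ ∀ x ∈ M \ ω.1.1, ω.2 x = ! f x with hQdef
      -- Every bad sample satisfies Q
      have hB1 : ∀ ω ∈ Bad, Q ω := by
        intro ω hω
        have hω2 : ¬ restrictedPigeonWidth (rho n k ω) A < ℓ := by
          have h := (Finset.mem_filter.1 (by rwa [hBadDef] at hω)).2
          simpa [hP] using h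
        simp only [restrictedPigeonWidth] at hω2
        by_cases hkill : killed (rho n k ω) A
        · rw [if_pos hkill] at hω2; omega
        rw [if_neg hkill] at hω2
        push_neg at hω2
        simp only [hQdef]
        constructor
        · -- many mentioned pigeons are in S
          have hsub : {v : ℕ | ∃ l ∈ A, rho n k ω l.1 = none ∧ l.1.pigeonOf = some v}
              ⊆ (((M ∩ ω.1.1).image Subtype.val : Finset ℕ) : Set ℕ) := by
            rintro v ⟨lit, hlitA, hnone, hpig⟩
            have hin : inS ω v = true := by
              cases hc : lit.1 with
              | q v' w =>
                rw [hc] at hpig hnone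
                simp only [ERVar.pigeonOf, Option.some.injEq] at hpig
                subst hpig
                by_contra hfalse
                simp only [Bool.not_eq_true] at hfalse
                simp only [rho, hfalse, Bool.false_eq_true, if_false] at hnone
                split at hnone <;> cases hnone
              | z v' w =>
                rw [hc] at hpig hnone
                simp only [ERVar.pigeonOf, Option.some.injEq] at hpig
                subst hpig
                by_contra hfalse
                simp only [Bool.not_eq_true] at hfalse
                simp only [rho, hfalse, Bool.false_eq_true, if_false] at hnone
                split at hnone <;> cases hnone
              | p u v'' => rw [hc] at hpig; simp [ERVar.pigeonOf] at hpig
              | r v'' => rw [hc] at hpig; simp [ERVar.pigeonOf] at hpig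
              | rr a b => rw [hc] at hpig; simp [ERVar.pigeonOf] at hpig
              | y u v'' => rw [hc] at hpig; simp [ERVar.pigeonOf] at hpig
            have hvmem : v ∈ Finset.Icc 1 n := by
              by_contra hvm
              simp only [inS, dif_neg hvm] at hin
              exact Bool.false_ne_true hin
            have hxS : (⟨v, hvmem⟩ : {x // x ∈ Finset.Icc 1 n}) ∈ ω.1.1 := by
              simp only [inS, dif_pos hvmem, decide_eq_true_eq] at hin
              exact hin
            refine Finset.mem_coe.2 (Finset.mem_image.2
              ⟨⟨v, hvmem⟩, Finset.mem_inter.2 ⟨?_, hxS⟩, rfl⟩)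
            simp only [hMdef, Finset.mem_filter]
            exact ⟨Finset.mem_univ _, lit, hlitA, hpig⟩
          calc ℓ ≤ Set.ncard {v : ℕ | ∃ l ∈ A, rho n k ω l.1 = none ∧ l.1.pigeonOf = some v} :=
                hω2
            _ ≤ Set.ncard (((M ∩ ω.1.1).image Subtype.val : Finset ℕ) : Set ℕ) :=
                Set.ncard_le_ncard hsub (Finset.finite_toSet _)
            _ = ((M ∩ ω.1.1).image Subtype.val).card := Set.ncard_coe_finset _
            _ = (M ∩ ω.1.1).card := Finset.card_image_of_injective _ Subtype.val_injective
        · -- outside S the random bits avoid the killing value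
          intro x hx
          obtain ⟨hxM, hxS⟩ := Finset.mem_sdiff.1 hx
          have hex : ∃ l ∈ A, l.1.pigeonOf = some x.val := by
            have h := hxM
            rw [hMdef, Finset.mem_filter] at h
            exact h.2
          obtain ⟨hA0, hp0⟩ := hex.choose_spec
          have hfx : f x = hex.choose.2 := by
            rw [hfdef]; exact dif_pos hex
          have hinS : inS ω x.val = false := by
            simp only [inS, dif_pos x.2]
            exact decide_eq_false hxS
          have hrho : rho n k ω hex.choose.1 = some (ω.2 x) := by
            cases hc : hex.choose.1 with
            | q v' w =>
              have hv' : v' = x.val := by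
                rw [hc] at hp0
                simpa [ERVar.pigeonOf] using hp0
              subst hv'
              simp only [rho, hinS, Bool.false_eq_true, if_false]
              rw [dif_pos x.2]
            | z v' w =>
              have hv' : v' = x.val := by
                rw [hc] at hp0
                simpa [ERVar.pigeonOf] using hp0
              subst hv'
              simp only [rho, hinS, Bool.false_eq_true, if_false]
              rw [dif_pos x.2]
            | p u v'' => rw [hc] at hp0; simp [ERVar.pigeonOf] at hp0
            | r v'' => rw [hc] at hp0; simp [ERVar.pigeonOf] at hp0
            | rr a b => rw [hc] at hp0; simp [ERVar.pigeonOf] at hp0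
            | y u v'' => rw [hc] at hp0; simp [ERVar.pigeonOf] at hp0
          have hne : ω.2 x ≠ hex.choose.2 := by
            intro he
            exact hkill ⟨hex.choose, hA0, by rw [hrho, he]⟩
          rw [hfx]
          exact Bool.eq_not_iff.mpr hne
      have hQelim : ∀ ω : Omega n k, Q ω →
          ℓ ≤ (M ∩ ω.1.1).card ∧ ∀ x ∈ M \ ω.1.1, ω.2 x = ! f x := by
        intro ω h
        simpa [hQdef] using h
      set BadQ := Finset.univ.filter Q with hBadQdef
      have hBB : Bad ⊆ BadQ := by
        intro ω hω
        rw [hBadQdef, Finset.mem_filter]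
        exact ⟨Finset.mem_univ _, hB1 ω hω⟩
      have hBadQcard : BadQ.card ≤ 2 ^ (n - (M.card - k)) *
          (BadQ.image (fun ω : Omega n k => ω.1.1)).card := by
        apply Finset.card_le_mul_card_image
        intro s hs
        obtain ⟨ω₀, hω₀, hω₀s⟩ := Finset.mem_image.1 hs
        have hsk : s.card = k := by rw [← hω₀s]; exact ω₀.1.2
        have hMs : M.card - k ≤ (M \ s).card := by
          have h1 := Finset.card_inter_add_card_sdiff M s
          have h2 : (M ∩ s).card ≤ k := by
            rw [← hsk]; exact Finset.card_le_card Finset.inter_subset_right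
          omega
        have hinj : (BadQ.filter (fun ω => ω.1.1 = s)).card ≤
            Fintype.card (((M \ s)ᶜ : Finset {x // x ∈ Finset.Icc 1 n}) → Bool) := by
          rw [← Finset.card_univ]
          apply Finset.card_le_card_of_injOn
            (fun ω (x : ((M \ s)ᶜ : Finset {x // x ∈ Finset.Icc 1 n})) => ω.2 x.1)
            (fun _ _ => Finset.mem_univ _)
          intro ω hω ω' hω' heq
          rw [Finset.mem_coe, Finset.mem_filter] at hω hω'
          obtain ⟨hωB, hωs⟩ := hω
          obtain ⟨hω'B, hω's⟩ := hω'
          rw [hBadQdef] at hωB hω'B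
          have hQω := hQelim ω (Finset.mem_filter.1 hωB).2
          have hQω' := hQelim ω' (Finset.mem_filter.1 hω'B).2
          have heq2 : ω.2 = ω'.2 := by
            funext y
            by_cases hy : y ∈ M \ s
            · have e1 : ω.2 y = ! f y := hQω.2 y (by rw [hωs]; exact hy)
              have e2 : ω'.2 y = ! f y := hQω'.2 y (by rw [hω's]; exact hy)
              rw [e1, e2]
            · exact congrFun heq ⟨y, Finset.mem_compl.2 hy⟩
          have heq1 : ω.1 = ω'.1 := Subtype.ext (by rw [hωs, hω's])
          exact Prod.ext heq1 heq2
        calc (BadQ.filter (fun ω => ω.1.1 = s)).card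
            ≤ Fintype.card (((M \ s)ᶜ : Finset {x // x ∈ Finset.Icc 1 n}) → Bool) := hinj
          _ = 2 ^ ((M \ s)ᶜ).card := by
              rw [Fintype.card_fun, Fintype.card_coe, Fintype.card_bool]
          _ = 2 ^ (n - (M \ s).card) := by rw [Finset.card_compl, hIcard]
          _ ≤ 2 ^ (n - (M.card - k)) := Nat.pow_le_pow_right (by omega) (by omega)
      set SB : Finset (Finset {x // x ∈ Finset.Icc 1 n}) :=
        Finset.univ.filter (fun s => s.card = k ∧ ℓ ≤ (M ∩ s).card) with hSBdef
      have himgsub : BadQ.image (fun ω : Omega n k => ω.1.1) ⊆ SB := by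
        intro s hs
        obtain ⟨ω₀, hω₀, hω₀s⟩ := Finset.mem_image.1 hs
        rw [hBadQdef] at hω₀
        have hQω₀ := hQelim ω₀ (Finset.mem_filter.1 hω₀).2
        rw [hSBdef, Finset.mem_filter]
        refine ⟨Finset.mem_univ _, ?_, ?_⟩
        · rw [← hω₀s]; exact ω₀.1.2
        · rw [← hω₀s]; exact hQω₀.1
      have hSBelim : ∀ s ∈ SB, s.card = k ∧ ℓ ≤ (M ∩ s).card := by
        intro s hs
        rw [hSBdef] at hs
        exact (Finset.mem_filter.1 hs).2
      set Tof : Finset {x // x ∈ Finset.Icc 1 n} → Finset {x // x ∈ Finset.Icc 1 n} := fun s =>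
        if h : ℓ ≤ (M ∩ s).card then (Finset.exists_subset_card_eq h).choose else ∅ with hTofdef
      have hTof_spec : ∀ s : Finset {x // x ∈ Finset.Icc 1 n}, ∀ h : ℓ ≤ (M ∩ s).card,
          Tof s ⊆ M ∩ s ∧ (Tof s).card = ℓ := by
        intro s h
        have e : Tof s = (Finset.exists_subset_card_eq h).choose := by
          rw [hTofdef]; exact dif_pos h
        rw [e]
        exact (Finset.exists_subset_card_eq h).choose_spec
      have hSBcard : SB.card ≤ Nat.choose (n - ℓ) (k - ℓ) * (SB.image Tof).card := by
        apply Finset.card_le_mul_card_image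
        intro t ht
        obtain ⟨s₀, hs₀, hs₀t⟩ := Finset.mem_image.1 ht
        have hs₀P := hSBelim s₀ hs₀
        have hcard_t : t.card = ℓ := by rw [← hs₀t]; exact (hTof_spec s₀ hs₀P.2).2
        have h1 : (SB.filter (fun s => Tof s = t)).card ≤ ((tᶜ).powersetCard (k - ℓ)).card := by
          apply Finset.card_le_card_of_injOn (fun s => s \ t)
          · intro s hs
            rw [Finset.mem_coe, Finset.mem_filter] at hs
            obtain ⟨hsSB, hst⟩ := hs
            have hsP := hSBelim s hsSB
            have hts : t ⊆ s := by
              rw [← hst]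
              exact (hTof_spec s hsP.2).1.trans Finset.inter_subset_right
            rw [Finset.mem_coe, Finset.mem_powersetCard]
            constructor
            · intro y hy
              exact Finset.mem_compl.2 (Finset.mem_sdiff.1 hy).2
            · rw [Finset.card_sdiff_of_subset hts, hsP.1, hcard_t]
          · intro s hs s' hs' heq
            rw [Finset.mem_coe, Finset.mem_filter] at hs hs'
            obtain ⟨hsSB, hst⟩ := hs
            obtain ⟨hs'SB, hs't⟩ := hs'
            have hsP := hSBelim s hsSB
            have hs'P := hSBelim s' hs'SB
            have hts : t ⊆ s := by
              rw [← hst]; exact (hTof_spec s hsP.2).1.trans Finset.inter_subset_right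
            have hts' : t ⊆ s' := by
              rw [← hs't]; exact (hTof_spec s' hs'P.2).1.trans Finset.inter_subset_right
            have heq' : s \ t = s' \ t := heq
            rw [← Finset.sdiff_union_of_subset hts, ← Finset.sdiff_union_of_subset hts', heq']
        calc (SB.filter (fun s => Tof s = t)).card ≤ ((tᶜ).powersetCard (k - ℓ)).card := h1
          _ = Nat.choose (tᶜ).card (k - ℓ) := Finset.card_powersetCard _ _
          _ = Nat.choose (n - ℓ) (k - ℓ) := by rw [Finset.card_compl, hIcard, hcard_t]
      have hTimg : SB.image Tof ⊆ M.powersetCard ℓ := by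
        intro t ht
        obtain ⟨s₀, hs₀, hs₀t⟩ := Finset.mem_image.1 ht
        have hs₀P := hSBelim s₀ hs₀
        obtain ⟨h1, h2⟩ := hTof_spec s₀ hs₀P.2
        rw [Finset.mem_powersetCard]
        refine ⟨?_, by rw [← hs₀t]; exact h2⟩
        rw [← hs₀t]
        exact h1.trans Finset.inter_subset_left
      have hmn : M.card ≤ n := by
        have h := Finset.card_le_univ M
        rwa [hIcard] at h
      have hBadNat : Bad.card ≤ 2 ^ k * Nat.choose (n - ℓ) (k - ℓ) * 2 ^ n := by
        have hch : Nat.choose M.card ℓ ≤ 2 ^ (M.card - k) * 2 ^ k := by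
          calc Nat.choose M.card ℓ ≤ 2 ^ M.card := choose_le_two_pow' _ _
            _ ≤ 2 ^ (M.card - k + k) := Nat.pow_le_pow_right (by omega) (by omega)
            _ = 2 ^ (M.card - k) * 2 ^ k := pow_add 2 _ _
        have hSB2 : SB.card ≤ Nat.choose (n - ℓ) (k - ℓ) * (2 ^ (M.card - k) * 2 ^ k) := by
          calc SB.card ≤ Nat.choose (n - ℓ) (k - ℓ) * (SB.image Tof).card := hSBcard
            _ ≤ Nat.choose (n - ℓ) (k - ℓ) * (M.powersetCard ℓ).card :=
                Nat.mul_le_mul_left _ (Finset.card_le_card hTimg)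
            _ = Nat.choose (n - ℓ) (k - ℓ) * Nat.choose M.card ℓ := by
                rw [Finset.card_powersetCard]
            _ ≤ Nat.choose (n - ℓ) (k - ℓ) * (2 ^ (M.card - k) * 2 ^ k) :=
                Nat.mul_le_mul_left _ hch
        calc Bad.card ≤ BadQ.card := Finset.card_le_card hBB
          _ ≤ 2 ^ (n - (M.card - k)) *
              (BadQ.image (fun ω : Omega n k => ω.1.1)).card := hBadQcard
          _ ≤ 2 ^ (n - (M.card - k)) * SB.card :=
              Nat.mul_le_mul_left _ (Finset.card_le_card himgsub)
          _ ≤ 2 ^ (n - (M.card - k)) *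
              (Nat.choose (n - ℓ) (k - ℓ) * (2 ^ (M.card - k) * 2 ^ k)) :=
              Nat.mul_le_mul_left _ hSB2
          _ = Nat.choose (n - ℓ) (k - ℓ) * 2 ^ k *
              (2 ^ (n - (M.card - k)) * 2 ^ (M.card - k)) := by ring
          _ = Nat.choose (n - ℓ) (k - ℓ) * 2 ^ k * 2 ^ n := by
              rw [← pow_add, Nat.sub_add_cancel (by omega)]
          _ = 2 ^ k * Nat.choose (n - ℓ) (k - ℓ) * 2 ^ n := by ring
      have hBadR : (Bad.card : ℝ) ≤
          2 ^ k * ((Nat.choose (n - ℓ) (k - ℓ) : ℕ) : ℝ) * 2 ^ n := by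
        exact_mod_cast hBadNat
      have hkeyR : (n : ℝ) ^ ℓ * ((Nat.choose (n - ℓ) (k - ℓ) : ℕ) : ℝ) ≤
          ((Nat.choose n k : ℕ) : ℝ) * (k : ℝ) ^ ℓ := by
        exact_mod_cast key_choose hlk hknN
      have hnum : (2:ℝ) ^ k * (k:ℝ) ^ ℓ ≤ (k:ℝ) * (16/15:ℝ) ^ ℓ * (2 * (k:ℝ) * L) ^ k := by
        have e : (2 * (k:ℝ) * L) ^ k = 2 ^ k * (k:ℝ) ^ k * L ^ k := by
          rw [mul_pow, mul_pow]
        have h1 : (k:ℝ) ^ ℓ ≤ (k:ℝ) ^ k := pow_le_pow_right₀ hkR1 hlk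
        have h2 : (1:ℝ) ≤ (16/15:ℝ) ^ ℓ := one_le_pow₀ (by norm_num)
        have h3 : (1:ℝ) ≤ L ^ k := one_le_pow₀ (by linarith)
        have h4 : (0:ℝ) ≤ 2 ^ k * (k:ℝ) ^ k := by positivity
        calc (2:ℝ) ^ k * (k:ℝ) ^ ℓ ≤ (2:ℝ) ^ k * (k:ℝ) ^ k :=
              mul_le_mul_of_nonneg_left h1 (by positivity)
          _ = 1 * (1 * (1 * ((2:ℝ) ^ k * (k:ℝ) ^ k))) := by ring
          _ ≤ (k:ℝ) * ((16/15:ℝ) ^ ℓ * (L ^ k * ((2:ℝ) ^ k * (k:ℝ) ^ k))) := by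
              apply mul_le_mul hkR1 ?_ (by positivity) (by linarith)
              apply mul_le_mul h2 ?_ (by positivity) (by positivity)
              exact mul_le_mul h3 le_rfl h4 (by linarith)
          _ = (k:ℝ) * (16/15:ℝ) ^ ℓ * (2 * (k:ℝ) * L) ^ k := by rw [e]; ring
      have hstep : (2:ℝ) ^ k * ((Nat.choose (n - ℓ) (k - ℓ) : ℕ) : ℝ) ≤
          (k:ℝ) * (16/15:ℝ) ^ ℓ * (2 * (k:ℝ) * L) ^ k / (n:ℝ) ^ ℓ *
            ((Nat.choose n k : ℕ) : ℝ) := by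
        rw [div_mul_eq_mul_div, le_div_iff₀ (by positivity : (0:ℝ) < (n:ℝ) ^ ℓ)]
        calc (2:ℝ) ^ k * ((Nat.choose (n - ℓ) (k - ℓ) : ℕ) : ℝ) * (n:ℝ) ^ ℓ
            = (2:ℝ) ^ k * ((n:ℝ) ^ ℓ * ((Nat.choose (n - ℓ) (k - ℓ) : ℕ) : ℝ)) := by ring
          _ ≤ (2:ℝ) ^ k * (((Nat.choose n k : ℕ) : ℝ) * (k:ℝ) ^ ℓ) :=
              mul_le_mul_of_nonneg_left hkeyR (by positivity)
          _ = ((2:ℝ) ^ k * (k:ℝ) ^ ℓ) * ((Nat.choose n k : ℕ) : ℝ) := by ring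
          _ ≤ ((k:ℝ) * (16/15:ℝ) ^ ℓ * (2 * (k:ℝ) * L) ^ k) * ((Nat.choose n k : ℕ) : ℝ) :=
              mul_le_mul_of_nonneg_right hnum (by positivity)
      calc (Bad.card : ℝ) ≤ 2 ^ k * ((Nat.choose (n - ℓ) (k - ℓ) : ℕ) : ℝ) * 2 ^ n := hBadR
        _ ≤ ((k:ℝ) * (16/15:ℝ) ^ ℓ * (2 * (k:ℝ) * L) ^ k / (n:ℝ) ^ ℓ *
              ((Nat.choose n k : ℕ) : ℝ)) * 2 ^ n :=
            mul_le_mul_of_nonneg_right hstep (by positivity)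
        _ = (k:ℝ) * (16/15:ℝ) ^ ℓ * (2 * (k:ℝ) * L) ^ k / (n:ℝ) ^ ℓ *
              ((Nat.choose n k * 2 ^ n : ℕ) : ℝ) := by
            push_cast
            ring


  -- finish
  have hBadle : Bad.card ≤ Nat.choose n k * 2 ^ n := by omega
  have hgc : (Good.card : ℝ) = ((Nat.choose n k * 2 ^ n : ℕ) : ℝ) - (Bad.card : ℝ) := by
    have h := hGB
    have h2 : (Good.card : ℝ) + (Bad.card : ℝ) = ((Nat.choose n k * 2 ^ n : ℕ) : ℝ) := by
      exact_mod_cast congrArg (Nat.cast : ℕ → ℝ) h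
    linarith
  rw [hncard, hgc, sub_div]
  have hone : ((Nat.choose n k * 2 ^ n : ℕ) : ℝ) / ((Nat.choose n k * 2 ^ n : ℕ) : ℝ) = 1 :=
    div_self (ne_of_gt hNR)
  have hBadD : (Bad.card : ℝ) / ((Nat.choose n k * 2 ^ n : ℕ) : ℝ) ≤
      (k:ℝ) * (16/15:ℝ) ^ ℓ * (2 * (k:ℝ) * L) ^ k / (n:ℝ) ^ ℓ :=
    (div_le_iff₀ hNR).2 hmain
  linarith


end NarrowProofs
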